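/- For every n ∈ ℕ, every fixed string a ∈ {0,1}^n, and all functions g, h : {0,1}^n → {0,1}^n, the probability, over (x,y,z) drawn from the n-fold product of the uniform distribution on {(0,1,1),(1,0,1),(1,1,0)}, that the triple (a_i, g(y)_i, h(z)_i) wins the anti-correlation game on (x_i, y_i, z_i) for more than 0.99n values of i ∈ [n], is at most 3·e^{−10^{−7} n}. -/
import Mathlib

open Finset

namespace Stmt6Aux

abbrev Pat := Bool × Bool × Bool

def pA : Pat := (false, true, true)
def pB : Pat := (true, true, false)
def pC : Pat := (true, false, true)

def Sfin : Finset Pat := {pA, pC, pB}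

noncomputable def sc : ℝ := 51 / 50
noncomputable def rc : ℝ := sc ^ 10
noncomputable def s1 : ℝ := 101 / 100
noncomputable def r1 : ℝ := s1 ^ 30

lemma sc_pos : (0:ℝ) < sc := by norm_num [sc]
lemma one_le_sc : (1:ℝ) ≤ sc := by norm_num [sc]
lemma rc_nonneg : (0:ℝ) ≤ rc := by rw [rc]; positivity
lemma rci_nonneg : (0:ℝ) ≤ rc⁻¹ := by rw [rc]; positivity
lemma two_le_rr : (2:ℝ) ≤ rc + rc⁻¹ := by norm_num [rc, sc]
lemma s1_pos : (0:ℝ) < s1 := by norm_num [s1]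
lemma one_le_s1 : (1:ℝ) ≤ s1 := by norm_num [s1]

/-- helper: cast a 0/1 natural sum to a real sum. -/
lemma cast_cnt {n : ℕ} (p : Fin n → Prop) [DecidablePred p] :
    ((∑ i, if p i then 1 else 0 : ℕ) : ℝ) = ∑ i, if p i then (1:ℝ) else 0 := by
  rw [Nat.cast_sum]
  exact Finset.sum_congr rfl fun i _ => by split_ifs <;> simp


/-- MGF-type bound, fibered over the `z` (third-coordinate) marginal. -/
lemma fiberZ (n : ℕ) (a : Fin n → Bool) (h : (Fin n → Bool) → (Fin n → Bool)) :
    ∑ q ∈ Fintype.piFinset (fun _ : Fin n => Sfin),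
      ∏ i, (if q i = pC ∧ h (fun j => (q j).2.2) i = a i then rc⁻¹
            else if q i = pA ∧ h (fun j => (q j).2.2) i = a i then rc else 1)
      ≤ ((rc + rc⁻¹) + 1) ^ n := by
  rw [← Finset.sum_fiberwise (Fintype.piFinset (fun _ : Fin n => Sfin))
      (fun q => (fun j => (q j).2.2))]
  have hstep : ∀ y : Fin n → Bool,
      (∑ q ∈ (Fintype.piFinset fun _ : Fin n => Sfin) with (fun j => (q j).2.2) = y,
        ∏ i, (if q i = pC ∧ h (fun j => (q j).2.2) i = a i then rc⁻¹
            else if q i = pA ∧ h (fun j => (q j).2.2) i = a i then rc else 1))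
      ≤ ∏ i, (if y i then (rc + rc⁻¹) else 1) := by
    intro y
    have hfib : ((Fintype.piFinset fun _ : Fin n => Sfin).filter
        (fun q => (fun j => (q j).2.2) = y))
        = Fintype.piFinset (fun i => Sfin.filter (fun v => v.2.2 = y i)) := by
      ext q
      simp only [Finset.mem_filter, Fintype.mem_piFinset, funext_iff, Finset.mem_filter]
      rw [← forall_and]
    rw [hfib]
    have hcongr : ∀ q ∈ Fintype.piFinset (fun i => Sfin.filter (fun v => v.2.2 = y i)),
        (∏ i, (if q i = pC ∧ h (fun j => (q j).2.2) i = a i then rc⁻¹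
            else if q i = pA ∧ h (fun j => (q j).2.2) i = a i then rc else 1))
        = ∏ i, (if q i = pC ∧ h y i = a i then rc⁻¹
            else if q i = pA ∧ h y i = a i then rc else 1) := by
      intro q hq
      have hy : (fun j => (q j).2.2) = y :=
        funext fun j => (Finset.mem_filter.mp ((Fintype.mem_piFinset).mp hq j)).2
      rw [hy]
    rw [Finset.sum_congr rfl hcongr,
      ← Finset.prod_univ_sum (fun i => Sfin.filter (fun v => v.2.2 = y i))
        (fun i v => if v = pC ∧ h y i = a i then rc⁻¹
            else if v = pA ∧ h y i = a i then rc else 1)]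
    apply Finset.prod_le_prod
    · intro i _
      apply Finset.sum_nonneg
      intro v _
      split_ifs
      · exact rci_nonneg
      · exact rc_nonneg
      · norm_num
    · intro i _
      cases hyi : y i with
      | false =>
          have hset : Sfin.filter (fun v => v.2.2 = false) = {pB} := by decide
          rw [hset, Finset.sum_singleton]
          norm_num [pA, pB, pC]
      | true =>
          have hset : Sfin.filter (fun v => v.2.2 = true) = {pA, pC} := by decide
          rw [hset, Finset.sum_pair (by decide : pA ≠ pC)]
          by_cases hb : h y i = a i
          · simp [hb, pA, pC]
          · simp only [hb, and_false, if_false]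
            simp only [if_true]
            linarith [two_le_rr]
  calc (∑ y : Fin n → Bool,
      ∑ q ∈ (Fintype.piFinset fun _ : Fin n => Sfin) with (fun j => (q j).2.2) = y,
        ∏ i, (if q i = pC ∧ h (fun j => (q j).2.2) i = a i then rc⁻¹
            else if q i = pA ∧ h (fun j => (q j).2.2) i = a i then rc else 1))
      ≤ ∑ y : Fin n → Bool, ∏ i, (if y i then (rc + rc⁻¹) else 1) :=
        Finset.sum_le_sum fun y _ => hstep y
    _ = ((rc + rc⁻¹) + 1) ^ n := by
        rw [← Fintype.piFinset_univ,
          ← Finset.prod_univ_sum (fun _ : Fin n => (Finset.univ : Finset Bool))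
            (fun _ b => if b then (rc + rc⁻¹) else 1)]
        simp

end Stmt6Aux

namespace Stmt6Aux

/-- MGF-type bound, fibered over the `y` (second-coordinate) marginal. -/
lemma fiberY (n : ℕ) (a : Fin n → Bool) (g : (Fin n → Bool) → (Fin n → Bool)) :
    ∑ q ∈ Fintype.piFinset (fun _ : Fin n => Sfin),
      ∏ i, (if q i = pB ∧ g (fun j => (q j).2.1) i = a i then rc⁻¹
            else if q i = pA ∧ g (fun j => (q j).2.1) i = a i then rc else 1)
      ≤ ((rc + rc⁻¹) + 1) ^ n := by
  rw [← Finset.sum_fiberwise (Fintype.piFinset (fun _ : Fin n => Sfin))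
      (fun q => (fun j => (q j).2.1))]
  have hstep : ∀ y : Fin n → Bool,
      (∑ q ∈ (Fintype.piFinset fun _ : Fin n => Sfin) with (fun j => (q j).2.1) = y,
        ∏ i, (if q i = pB ∧ g (fun j => (q j).2.1) i = a i then rc⁻¹
            else if q i = pA ∧ g (fun j => (q j).2.1) i = a i then rc else 1))
      ≤ ∏ i, (if y i then (rc + rc⁻¹) else 1) := by
    intro y
    have hfib : ((Fintype.piFinset fun _ : Fin n => Sfin).filter
        (fun q => (fun j => (q j).2.1) = y))
        = Fintype.piFinset (fun i => Sfin.filter (fun v => v.2.1 = y i)) := by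
      ext q
      simp only [Finset.mem_filter, Fintype.mem_piFinset, funext_iff, Finset.mem_filter]
      rw [← forall_and]
    rw [hfib]
    have hcongr : ∀ q ∈ Fintype.piFinset (fun i => Sfin.filter (fun v => v.2.1 = y i)),
        (∏ i, (if q i = pB ∧ g (fun j => (q j).2.1) i = a i then rc⁻¹
            else if q i = pA ∧ g (fun j => (q j).2.1) i = a i then rc else 1))
        = ∏ i, (if q i = pB ∧ g y i = a i then rc⁻¹
            else if q i = pA ∧ g y i = a i then rc else 1) := by
      intro q hq
      have hy : (fun j => (q j).2.1) = y :=
        funext fun j => (Finset.mem_filter.mp ((Fintype.mem_piFinset).mp hq j)).2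
      rw [hy]
    rw [Finset.sum_congr rfl hcongr,
      ← Finset.prod_univ_sum (fun i => Sfin.filter (fun v => v.2.1 = y i))
        (fun i v => if v = pB ∧ g y i = a i then rc⁻¹
            else if v = pA ∧ g y i = a i then rc else 1)]
    apply Finset.prod_le_prod
    · intro i _
      apply Finset.sum_nonneg
      intro v _
      split_ifs
      · exact rci_nonneg
      · exact rc_nonneg
      · norm_num
    · intro i _
      cases hyi : y i with
      | false =>
          have hset : Sfin.filter (fun v => v.2.1 = false) = {pC} := by decide
          rw [hset, Finset.sum_singleton]
          norm_num [pA, pB, pC]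
      | true =>
          have hset : Sfin.filter (fun v => v.2.1 = true) = {pA, pB} := by decide
          rw [hset, Finset.sum_pair (by decide : pA ≠ pB)]
          by_cases hb : g y i = a i
          · simp [hb, pA, pB]
          · simp only [hb, and_false, if_false]
            simp only [if_true]
            linarith [two_le_rr]
  calc (∑ y : Fin n → Bool,
      ∑ q ∈ (Fintype.piFinset fun _ : Fin n => Sfin) with (fun j => (q j).2.1) = y,
        ∏ i, (if q i = pB ∧ g (fun j => (q j).2.1) i = a i then rc⁻¹
            else if q i = pA ∧ g (fun j => (q j).2.1) i = a i then rc else 1))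
      ≤ ∑ y : Fin n → Bool, ∏ i, (if y i then (rc + rc⁻¹) else 1) :=
        Finset.sum_le_sum fun y _ => hstep y
    _ = ((rc + rc⁻¹) + 1) ^ n := by
        rw [← Fintype.piFinset_univ,
          ← Finset.prod_univ_sum (fun _ : Fin n => (Finset.univ : Finset Bool))
            (fun _ b => if b then (rc + rc⁻¹) else 1)]
        simp

end Stmt6Aux


namespace Stmt6Aux

lemma exp_target : (1:ℝ) - (10:ℝ)^(-(7:ℤ)) ≤ Real.exp (-(10:ℝ)^(-(7:ℤ))) := by
  have := Real.add_one_le_exp (-(10:ℝ)^(-(7:ℤ)))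
  linarith

lemma pow_exp_le (n : ℕ) {x : ℝ} (hx0 : 0 ≤ x) (hx : x ≤ 1 - (10:ℝ)^(-(7:ℤ))) :
    x ^ n ≤ Real.exp (-(10:ℝ)^(-(7:ℤ)) * n) := by
  calc x ^ n ≤ (Real.exp (-(10:ℝ)^(-(7:ℤ)))) ^ n :=
        pow_le_pow_left₀ hx0 (hx.trans exp_target) n
    _ = Real.exp (-(10:ℝ)^(-(7:ℤ)) * n) := by rw [← Real.exp_nat_mul, mul_comm]

lemma eventY (n : ℕ) (a : Fin n → Bool) (g : (Fin n → Bool) → (Fin n → Bool)) :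
    ∑ q ∈ Fintype.piFinset (fun _ : Fin n => Sfin),
      (if 10 * (∑ i, if q i = pB ∧ g (fun j => (q j).2.1) i = a i then 1 else 0) + n
          ≤ 10 * (∑ i, if q i = pA ∧ g (fun j => (q j).2.1) i = a i then 1 else 0)
       then ((1:ℝ)/3)^n else 0)
    ≤ Real.exp (-(10:ℝ)^(-(7:ℤ)) * n) := by
  have hsci : (0:ℝ) ≤ sc⁻¹ := inv_nonneg.2 sc_pos.le
  have hpoint : ∀ q ∈ Fintype.piFinset (fun _ : Fin n => Sfin),
      (if 10 * (∑ i, if q i = pB ∧ g (fun j => (q j).2.1) i = a i then 1 else 0) + n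
          ≤ 10 * (∑ i, if q i = pA ∧ g (fun j => (q j).2.1) i = a i then 1 else 0)
       then ((1:ℝ)/3)^n else 0)
      ≤ ((1:ℝ)/3)^n * (sc⁻¹)^n *
          ∏ i, (if q i = pB ∧ g (fun j => (q j).2.1) i = a i then rc⁻¹
            else if q i = pA ∧ g (fun j => (q j).2.1) i = a i then rc else 1) := by
    intro q _
    have hWnonneg : (0:ℝ) ≤ ∏ i, (if q i = pB ∧ g (fun j => (q j).2.1) i = a i then rc⁻¹
            else if q i = pA ∧ g (fun j => (q j).2.1) i = a i then rc else 1) := by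
      refine Finset.prod_nonneg fun i _ => ?_
      split_ifs
      · exact rci_nonneg
      · exact rc_nonneg
      · norm_num
    split_ifs with hE
    · -- event holds: weight is at least sc^n
      have hW : (∏ i, (if q i = pB ∧ g (fun j => (q j).2.1) i = a i then rc⁻¹
            else if q i = pA ∧ g (fun j => (q j).2.1) i = a i then rc else 1))
          = rc ^ (∑ i, if q i = pA ∧ g (fun j => (q j).2.1) i = a i then 1 else 0)
            * (rc⁻¹) ^ (∑ i, if q i = pB ∧ g (fun j => (q j).2.1) i = a i then 1 else 0) := by
        rw [← Finset.prod_pow_eq_pow_sum, ← Finset.prod_pow_eq_pow_sum,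
          ← Finset.prod_mul_distrib]
        refine Finset.prod_congr rfl fun i _ => ?_
        by_cases h1 : q i = pB ∧ g (fun j => (q j).2.1) i = a i
        · have h2 : ¬ (q i = pA ∧ g (fun j => (q j).2.1) i = a i) := by
            rintro ⟨h2a, -⟩
            exact absurd (h1.1.symm.trans h2a) (by decide)
          simp [h1, h2, pA, pB]
        · by_cases h2 : q i = pA ∧ g (fun j => (q j).2.1) i = a i
          · simp [h1, h2, pA, pB]
          · simp [h1, h2]
      have hge : sc ^ n ≤ ∏ i, (if q i = pB ∧ g (fun j => (q j).2.1) i = a i then rc⁻¹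
            else if q i = pA ∧ g (fun j => (q j).2.1) i = a i then rc else 1) := by
        rw [hW, rc, ← pow_mul, inv_pow, ← pow_mul, ← div_eq_mul_inv,
          le_div_iff₀ (pow_pos sc_pos _), ← pow_add]
        exact pow_le_pow_right₀ one_le_sc (by omega)
      have h1 : (0:ℝ) ≤ ((1:ℝ)/3)^n := by positivity
      have h2 : (0:ℝ) ≤ (sc⁻¹)^n := pow_nonneg hsci n
      calc ((1:ℝ)/3)^n = ((1:ℝ)/3)^n * ((sc⁻¹)^n * sc^n) := by
            rw [← mul_pow, inv_mul_cancel₀ (ne_of_gt sc_pos), one_pow, mul_one]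
        _ ≤ ((1:ℝ)/3)^n * ((sc⁻¹)^n * ∏ i, (if q i = pB ∧ g (fun j => (q j).2.1) i = a i then rc⁻¹
            else if q i = pA ∧ g (fun j => (q j).2.1) i = a i then rc else 1)) :=
            mul_le_mul_of_nonneg_left (mul_le_mul_of_nonneg_left hge h2) h1
        _ = _ := by ring
    · positivity
  calc (∑ q ∈ Fintype.piFinset (fun _ : Fin n => Sfin),
      (if 10 * (∑ i, if q i = pB ∧ g (fun j => (q j).2.1) i = a i then 1 else 0) + n
          ≤ 10 * (∑ i, if q i = pA ∧ g (fun j => (q j).2.1) i = a i then 1 else 0)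
       then ((1:ℝ)/3)^n else 0))
      ≤ ∑ q ∈ Fintype.piFinset (fun _ : Fin n => Sfin),
          ((1:ℝ)/3)^n * (sc⁻¹)^n *
          ∏ i, (if q i = pB ∧ g (fun j => (q j).2.1) i = a i then rc⁻¹
            else if q i = pA ∧ g (fun j => (q j).2.1) i = a i then rc else 1) :=
        Finset.sum_le_sum hpoint
    _ = ((1:ℝ)/3)^n * (sc⁻¹)^n * ∑ q ∈ Fintype.piFinset (fun _ : Fin n => Sfin),
          ∏ i, (if q i = pB ∧ g (fun j => (q j).2.1) i = a i then rc⁻¹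
            else if q i = pA ∧ g (fun j => (q j).2.1) i = a i then rc else 1) := by
        rw [← Finset.mul_sum]
    _ ≤ ((1:ℝ)/3)^n * (sc⁻¹)^n * ((rc + rc⁻¹) + 1) ^ n := by
        refine mul_le_mul_of_nonneg_left (fiberY n a g) ?_
        have h1 : (0:ℝ) ≤ ((1:ℝ)/3)^n := by positivity
        exact mul_nonneg h1 (pow_nonneg hsci n)
    _ = ((1:ℝ)/3 * sc⁻¹ * ((rc + rc⁻¹) + 1)) ^ n := by rw [mul_pow, mul_pow]
    _ ≤ Real.exp (-(10:ℝ)^(-(7:ℤ)) * n) := by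
        refine pow_exp_le n ?_ ?_
        · norm_num [sc, rc]
        · norm_num [sc, rc]

lemma eventZ (n : ℕ) (a : Fin n → Bool) (h : (Fin n → Bool) → (Fin n → Bool)) :
    ∑ q ∈ Fintype.piFinset (fun _ : Fin n => Sfin),
      (if 10 * (∑ i, if q i = pC ∧ h (fun j => (q j).2.2) i = a i then 1 else 0) + n
          ≤ 10 * (∑ i, if q i = pA ∧ h (fun j => (q j).2.2) i = a i then 1 else 0)
       then ((1:ℝ)/3)^n else 0)
    ≤ Real.exp (-(10:ℝ)^(-(7:ℤ)) * n) := by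
  have hsci : (0:ℝ) ≤ sc⁻¹ := inv_nonneg.2 sc_pos.le
  have hpoint : ∀ q ∈ Fintype.piFinset (fun _ : Fin n => Sfin),
      (if 10 * (∑ i, if q i = pC ∧ h (fun j => (q j).2.2) i = a i then 1 else 0) + n
          ≤ 10 * (∑ i, if q i = pA ∧ h (fun j => (q j).2.2) i = a i then 1 else 0)
       then ((1:ℝ)/3)^n else 0)
      ≤ ((1:ℝ)/3)^n * (sc⁻¹)^n *
          ∏ i, (if q i = pC ∧ h (fun j => (q j).2.2) i = a i then rc⁻¹
            else if q i = pA ∧ h (fun j => (q j).2.2) i = a i then rc else 1) := by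
    intro q _
    have hWnonneg : (0:ℝ) ≤ ∏ i, (if q i = pC ∧ h (fun j => (q j).2.2) i = a i then rc⁻¹
            else if q i = pA ∧ h (fun j => (q j).2.2) i = a i then rc else 1) := by
      refine Finset.prod_nonneg fun i _ => ?_
      split_ifs
      · exact rci_nonneg
      · exact rc_nonneg
      · norm_num
    split_ifs with hE
    · -- event holds: weight is at least sc^n
      have hW : (∏ i, (if q i = pC ∧ h (fun j => (q j).2.2) i = a i then rc⁻¹
            else if q i = pA ∧ h (fun j => (q j).2.2) i = a i then rc else 1))
          = rc ^ (∑ i, if q i = pA ∧ h (fun j => (q j).2.2) i = a i then 1 else 0)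
            * (rc⁻¹) ^ (∑ i, if q i = pC ∧ h (fun j => (q j).2.2) i = a i then 1 else 0) := by
        rw [← Finset.prod_pow_eq_pow_sum, ← Finset.prod_pow_eq_pow_sum,
          ← Finset.prod_mul_distrib]
        refine Finset.prod_congr rfl fun i _ => ?_
        by_cases h1 : q i = pC ∧ h (fun j => (q j).2.2) i = a i
        · have h2 : ¬ (q i = pA ∧ h (fun j => (q j).2.2) i = a i) := by
            rintro ⟨h2a, -⟩
            exact absurd (h1.1.symm.trans h2a) (by decide)
          simp [h1, h2, pA, pC]
        · by_cases h2 : q i = pA ∧ h (fun j => (q j).2.2) i = a i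
          · simp [h1, h2, pA, pC]
          · simp [h1, h2]
      have hge : sc ^ n ≤ ∏ i, (if q i = pC ∧ h (fun j => (q j).2.2) i = a i then rc⁻¹
            else if q i = pA ∧ h (fun j => (q j).2.2) i = a i then rc else 1) := by
        rw [hW, rc, ← pow_mul, inv_pow, ← pow_mul, ← div_eq_mul_inv,
          le_div_iff₀ (pow_pos sc_pos _), ← pow_add]
        exact pow_le_pow_right₀ one_le_sc (by omega)
      have h1 : (0:ℝ) ≤ ((1:ℝ)/3)^n := by positivity
      have h2 : (0:ℝ) ≤ (sc⁻¹)^n := pow_nonneg hsci n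
      calc ((1:ℝ)/3)^n = ((1:ℝ)/3)^n * ((sc⁻¹)^n * sc^n) := by
            rw [← mul_pow, inv_mul_cancel₀ (ne_of_gt sc_pos), one_pow, mul_one]
        _ ≤ ((1:ℝ)/3)^n * ((sc⁻¹)^n * ∏ i, (if q i = pC ∧ h (fun j => (q j).2.2) i = a i then rc⁻¹
            else if q i = pA ∧ h (fun j => (q j).2.2) i = a i then rc else 1)) :=
            mul_le_mul_of_nonneg_left (mul_le_mul_of_nonneg_left hge h2) h1
        _ = _ := by ring
    · positivity
  calc (∑ q ∈ Fintype.piFinset (fun _ : Fin n => Sfin),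
      (if 10 * (∑ i, if q i = pC ∧ h (fun j => (q j).2.2) i = a i then 1 else 0) + n
          ≤ 10 * (∑ i, if q i = pA ∧ h (fun j => (q j).2.2) i = a i then 1 else 0)
       then ((1:ℝ)/3)^n else 0))
      ≤ ∑ q ∈ Fintype.piFinset (fun _ : Fin n => Sfin),
          ((1:ℝ)/3)^n * (sc⁻¹)^n *
          ∏ i, (if q i = pC ∧ h (fun j => (q j).2.2) i = a i then rc⁻¹
            else if q i = pA ∧ h (fun j => (q j).2.2) i = a i then rc else 1) :=
        Finset.sum_le_sum hpoint
    _ = ((1:ℝ)/3)^n * (sc⁻¹)^n * ∑ q ∈ Fintype.piFinset (fun _ : Fin n => Sfin),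
          ∏ i, (if q i = pC ∧ h (fun j => (q j).2.2) i = a i then rc⁻¹
            else if q i = pA ∧ h (fun j => (q j).2.2) i = a i then rc else 1) := by
        rw [← Finset.mul_sum]
    _ ≤ ((1:ℝ)/3)^n * (sc⁻¹)^n * ((rc + rc⁻¹) + 1) ^ n := by
        refine mul_le_mul_of_nonneg_left (fiberZ n a h) ?_
        have h1 : (0:ℝ) ≤ ((1:ℝ)/3)^n := by positivity
        exact mul_nonneg h1 (pow_nonneg hsci n)
    _ = ((1:ℝ)/3 * sc⁻¹ * ((rc + rc⁻¹) + 1)) ^ n := by rw [mul_pow, mul_pow]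
    _ ≤ Real.exp (-(10:ℝ)^(-(7:ℤ)) * n) := by
        refine pow_exp_le n ?_ ?_
        · norm_num [sc, rc]
        · norm_num [sc, rc]

end Stmt6Aux

namespace Stmt6Aux

lemma eventA (n : ℕ) :
    ∑ q ∈ Fintype.piFinset (fun _ : Fin n => Sfin),
      (if 30 * (∑ i, if q i = pA then 1 else 0) ≤ 7 * n then ((1:ℝ)/3)^n else 0)
    ≤ Real.exp (-(10:ℝ)^(-(7:ℤ)) * n) := by
  have hr1 : (0:ℝ) < r1 := by norm_num [r1, s1]
  have hp : (0:ℝ) < (s1^7)^n := pow_pos (pow_pos s1_pos 7) n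
  have hpoint : ∀ q ∈ Fintype.piFinset (fun _ : Fin n => Sfin),
      (if 30 * (∑ i, if q i = pA then 1 else 0) ≤ 7 * n then ((1:ℝ)/3)^n else 0)
      ≤ ((1:ℝ)/3)^n * (s1^7)^n * ∏ i, (if q i = pA then r1⁻¹ else 1) := by
    intro q _
    have hWnonneg : (0:ℝ) ≤ ∏ i, (if q i = pA then r1⁻¹ else 1) := by
      refine Finset.prod_nonneg fun i _ => ?_
      split_ifs
      · exact inv_nonneg.2 hr1.le
      · norm_num
    split_ifs with hE
    · have hW : (∏ i, (if q i = pA then r1⁻¹ else 1))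
          = (r1⁻¹) ^ (∑ i, if q i = pA then 1 else 0) := by
        rw [← Finset.prod_pow_eq_pow_sum]
        refine Finset.prod_congr rfl fun i _ => ?_
        by_cases h1 : q i = pA <;> simp [h1]
      have hge : ((s1^7)^n)⁻¹ ≤ ∏ i, (if q i = pA then r1⁻¹ else 1) := by
        rw [hW, r1, inv_pow, ← pow_mul, ← pow_mul]
        exact inv_anti₀ (pow_pos s1_pos _)
          (pow_le_pow_right₀ one_le_s1 (by omega))
      have h1 : (0:ℝ) ≤ ((1:ℝ)/3)^n := by positivity
      calc ((1:ℝ)/3)^n = ((1:ℝ)/3)^n * ((s1^7)^n * ((s1^7)^n)⁻¹) := by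
            rw [mul_inv_cancel₀ (ne_of_gt hp), mul_one]
        _ ≤ ((1:ℝ)/3)^n * ((s1^7)^n * ∏ i, (if q i = pA then r1⁻¹ else 1)) :=
            mul_le_mul_of_nonneg_left (mul_le_mul_of_nonneg_left hge hp.le) h1
        _ = _ := by ring
    · positivity
  calc (∑ q ∈ Fintype.piFinset (fun _ : Fin n => Sfin),
      (if 30 * (∑ i, if q i = pA then 1 else 0) ≤ 7 * n then ((1:ℝ)/3)^n else 0))
      ≤ ∑ q ∈ Fintype.piFinset (fun _ : Fin n => Sfin),
          ((1:ℝ)/3)^n * (s1^7)^n * ∏ i, (if q i = pA then r1⁻¹ else 1) :=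
        Finset.sum_le_sum hpoint
    _ = ((1:ℝ)/3)^n * (s1^7)^n * ∑ q ∈ Fintype.piFinset (fun _ : Fin n => Sfin),
          ∏ i, (if q i = pA then r1⁻¹ else 1) := by rw [← Finset.mul_sum]
    _ = ((1:ℝ)/3)^n * (s1^7)^n * (r1⁻¹ + (1 + 1)) ^ n := by
        rw [← Finset.prod_univ_sum (fun _ : Fin n => Sfin)
          (fun _ v => if v = pA then r1⁻¹ else 1)]
        have hs : (∑ v ∈ Sfin, (if v = pA then r1⁻¹ else 1)) = r1⁻¹ + (1 + 1) := by
          show (∑ v ∈ ({pA, pC, pB} : Finset Pat), (if v = pA then r1⁻¹ else 1)) = _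
          rw [Finset.sum_insert (by decide), Finset.sum_insert (by decide),
            Finset.sum_singleton]
          norm_num [pA, pB, pC]
        rw [Finset.prod_congr rfl fun i _ => hs, Finset.prod_const, Finset.card_univ,
          Fintype.card_fin]
    _ = ((1:ℝ)/3 * s1^7 * (r1⁻¹ + (1 + 1))) ^ n := by rw [mul_pow, mul_pow]
    _ ≤ Real.exp (-(10:ℝ)^(-(7:ℤ)) * n) := by
        refine pow_exp_le n ?_ ?_
        · norm_num [s1, r1]
        · norm_num [s1, r1]

end Stmt6Aux

namespace Stmt6Aux

/-- Pointwise loss bound: per coordinate, the loss indicator dominates the signed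
combination of pattern indicators. -/
lemma loss_pointwise (v : Pat) (hv : v ∈ Sfin) (b c ab : Bool) :
    (if v = pA then (1:ℝ) else 0) - (if v = pA ∧ b = ab then 1 else 0)
      - (if v = pA ∧ c = ab then 1 else 0)
      + (if v = pB ∧ b = ab then 1 else 0) + (if v = pC ∧ c = ab then 1 else 0)
    ≤ (if ¬((if v.1 then 1 else 0) * (if ab then 1 else 0)
          + (if v.2.1 then 1 else 0) * (if b then 1 else 0)
          + (if v.2.2 then 1 else 0) * (if c then 1 else 0) = (1:ℕ))
        then (1:ℝ) else 0) := by
  fin_cases hv <;> cases b <;> cases c <;> cases ab <;>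
    norm_num [pA, pB, pC]

lemma core (n : ℕ) (a : Fin n → Bool) (g h : (Fin n → Bool) → (Fin n → Bool))
    (q : Fin n → Pat) (hq : q ∈ Fintype.piFinset (fun _ : Fin n => Sfin))
    (hwin : (0.99 : ℝ) * n <
        ((Finset.univ.filter fun i : Fin n =>
          (if (q i).1 then 1 else 0) * (if a i then 1 else 0)
            + (if (q i).2.1 then 1 else 0) * (if g (fun j => (q j).2.1) i then 1 else 0)
            + (if (q i).2.2 then 1 else 0) * (if h (fun j => (q j).2.2) i then 1 else 0)
            = (1:ℕ)).card : ℝ)) :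
    (30 * (∑ i, if q i = pA then 1 else 0) ≤ 7 * n)
    ∨ (10 * (∑ i, if q i = pB ∧ g (fun j => (q j).2.1) i = a i then 1 else 0) + n
        ≤ 10 * (∑ i, if q i = pA ∧ g (fun j => (q j).2.1) i = a i then 1 else 0))
    ∨ (10 * (∑ i, if q i = pC ∧ h (fun j => (q j).2.2) i = a i then 1 else 0) + n
        ≤ 10 * (∑ i, if q i = pA ∧ h (fun j => (q j).2.2) i = a i then 1 else 0)) := by
  by_contra hcon
  push_neg at hcon
  obtain ⟨h1, h2, h3⟩ := hcon
  -- the win predicate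
  set W : Fin n → Prop := fun i =>
    (if (q i).1 then 1 else 0) * (if a i then 1 else 0)
      + (if (q i).2.1 then 1 else 0) * (if g (fun j => (q j).2.1) i then 1 else 0)
      + (if (q i).2.2 then 1 else 0) * (if h (fun j => (q j).2.2) i then 1 else 0)
      = (1:ℕ) with hWdef
  have hcard : ((Finset.univ.filter W).card : ℝ) = ∑ i, (if W i then (1:ℝ) else 0) := by
    rw [Finset.card_filter, Nat.cast_sum]
    exact Finset.sum_congr rfl fun i _ => by
      rw [apply_ite (Nat.cast : ℕ → ℝ), Nat.cast_one, Nat.cast_zero]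
  have hsum : ∀ i ∈ Finset.univ,
      (if q i = pA then (1:ℝ) else 0)
        - (if q i = pA ∧ g (fun j => (q j).2.1) i = a i then 1 else 0)
        - (if q i = pA ∧ h (fun j => (q j).2.2) i = a i then 1 else 0)
        + (if q i = pB ∧ g (fun j => (q j).2.1) i = a i then 1 else 0)
        + (if q i = pC ∧ h (fun j => (q j).2.2) i = a i then 1 else 0)
      ≤ (if ¬ W i then (1:ℝ) else 0) := by
    intro i _
    have hvi : q i ∈ Sfin := (Fintype.mem_piFinset.mp hq) i
    exact loss_pointwise (q i) hvi (g (fun j => (q j).2.1) i) (h (fun j => (q j).2.2) i) (a i)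
  have hS := Finset.sum_le_sum hsum
  rw [Finset.sum_add_distrib, Finset.sum_add_distrib, Finset.sum_sub_distrib,
    Finset.sum_sub_distrib] at hS
  have hloss : (∑ i, (if ¬ W i then (1:ℝ) else 0)) = n - ∑ i, (if W i then (1:ℝ) else 0) := by
    rw [eq_sub_iff_add_eq, ← Finset.sum_add_distrib]
    have : ∀ i : Fin n, (if ¬ W i then (1:ℝ) else 0) + (if W i then 1 else 0) = 1 := by
      intro i
      by_cases hw : W i
      · rw [if_neg (not_not_intro hw), if_pos hw, zero_add]
      · rw [if_pos hw, if_neg hw, add_zero]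
    rw [Finset.sum_congr rfl fun i _ => this i, Finset.sum_const, Finset.card_univ,
      Fintype.card_fin, nsmul_eq_mul, mul_one]
  rw [hloss] at hS
  -- convert the natural-number hypotheses to real inequalities
  have c1 : (7:ℝ) * n < 30 * ∑ i, (if q i = pA then (1:ℝ) else 0) := by
    rw [← cast_cnt]
    exact_mod_cast h1
  have c2 : (10:ℝ) * (∑ i, (if q i = pA ∧ g (fun j => (q j).2.1) i = a i then (1:ℝ) else 0))
      < 10 * (∑ i, (if q i = pB ∧ g (fun j => (q j).2.1) i = a i then (1:ℝ) else 0)) + n := by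
    rw [← cast_cnt, ← cast_cnt]
    exact_mod_cast h2
  have c3 : (10:ℝ) * (∑ i, (if q i = pA ∧ h (fun j => (q j).2.2) i = a i then (1:ℝ) else 0))
      < 10 * (∑ i, (if q i = pC ∧ h (fun j => (q j).2.2) i = a i then (1:ℝ) else 0)) + n := by
    rw [← cast_cnt, ← cast_cnt]
    exact_mod_cast h3
  rw [hcard] at hwin
  have h099 : (0.99 : ℝ) = 99 / 100 := by norm_num
  rw [h099] at hwin
  linarith

end Stmt6Aux

namespace Stmt6Aux

lemma ite_nonneg' {P : Prop} [Decidable P] {x : ℝ} (hx : 0 ≤ x) :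
    0 ≤ if P then x else 0 := by
  split_ifs
  · exact hx
  · exact le_refl 0

lemma le_add_ites {P1 P2 P3 : Prop} [Decidable P1] [Decidable P2] [Decidable P3] {x : ℝ}
    (hx : 0 ≤ x) (hP : P1 ∨ P2 ∨ P3) :
    x ≤ (if P1 then x else 0) + (if P2 then x else 0) + (if P3 then x else 0) := by
  have a1 : 0 ≤ (if P1 then x else 0) := ite_nonneg' hx
  have a2 : 0 ≤ (if P2 then x else 0) := ite_nonneg' hx
  have a3 : 0 ≤ (if P3 then x else 0) := ite_nonneg' hx
  rcases hP with hh|hh|hh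
  · rw [if_pos hh]
    linarith
  · rw [if_pos hh]
    linarith
  · rw [if_pos hh]
    linarith

end Stmt6Aux

/-- In the n-fold anti-correlation game, if the first player's answer is a
fixed string `a`, then for any strategies `g, h` of the other two players, the probability
(over questions i.i.d. uniform on the weight-2 triples) of winning more than `0.99 n`
coordinates is at most `3·exp(−10⁻⁷ n)`. -/
theorem stmt_6 (n : ℕ) (a : Fin n → Bool)
    (g h : (Fin n → Bool) → (Fin n → Bool)) :
    let b2n : Bool → ℕ := fun b => if b then 1 else 0
    let S : Finset (Bool × Bool × Bool) :=
      {(false, true, true), (true, false, true), (true, true, false)}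
    (∑ q ∈ Fintype.piFinset (fun _ : Fin n => S),
        if (0.99 : ℝ) * n <
            ((Finset.univ.filter fun i : Fin n =>
              b2n (q i).1 * b2n (a i)
                + b2n (q i).2.1 * b2n (g (fun j => (q j).2.1) i)
                + b2n (q i).2.2 * b2n (h (fun j => (q j).2.2) i) = 1).card : ℝ)
        then ((1:ℝ)/3)^n else 0)
      ≤ 3 * Real.exp (-(10:ℝ)^(-(7:ℤ)) * n) := by
  intro b2n S
  have hb2n : b2n = fun b => if b then 1 else 0 := rfl
  have hS : S = Stmt6Aux.Sfin := rfl
  rw [hS]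
  simp only [hb2n]
  open Stmt6Aux in
  have hnn : (0:ℝ) ≤ ((1:ℝ)/3)^n := by positivity
  have key : ∀ q ∈ Fintype.piFinset (fun _ : Fin n => Stmt6Aux.Sfin),
      (if (0.99 : ℝ) * n <
          ((Finset.univ.filter fun i : Fin n =>
            (if (q i).1 then 1 else 0) * (if a i then 1 else 0)
              + (if (q i).2.1 then 1 else 0) * (if g (fun j => (q j).2.1) i then 1 else 0)
              + (if (q i).2.2 then 1 else 0) * (if h (fun j => (q j).2.2) i then 1 else 0)
              = (1:ℕ)).card : ℝ)
        then ((1:ℝ)/3)^n else 0)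
      ≤ (if 30 * (∑ i, if q i = Stmt6Aux.pA then 1 else 0) ≤ 7 * n
            then ((1:ℝ)/3)^n else 0)
        + (if 10 * (∑ i, if q i = Stmt6Aux.pB ∧ g (fun j => (q j).2.1) i = a i then 1 else 0) + n
              ≤ 10 * (∑ i, if q i = Stmt6Aux.pA ∧ g (fun j => (q j).2.1) i = a i then 1 else 0)
            then ((1:ℝ)/3)^n else 0)
        + (if 10 * (∑ i, if q i = Stmt6Aux.pC ∧ h (fun j => (q j).2.2) i = a i then 1 else 0) + n
              ≤ 10 * (∑ i, if q i = Stmt6Aux.pA ∧ h (fun j => (q j).2.2) i = a i then 1 else 0)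
            then ((1:ℝ)/3)^n else 0) := by
    intro q hq
    by_cases hc : (0.99 : ℝ) * n <
        ((Finset.univ.filter fun i : Fin n =>
          (if (q i).1 then 1 else 0) * (if a i then 1 else 0)
            + (if (q i).2.1 then 1 else 0) * (if g (fun j => (q j).2.1) i then 1 else 0)
            + (if (q i).2.2 then 1 else 0) * (if h (fun j => (q j).2.2) i then 1 else 0)
            = (1:ℕ)).card : ℝ)
    · rw [if_pos hc]
      exact Stmt6Aux.le_add_ites hnn (Stmt6Aux.core n a g h q hq hc)
    · rw [if_neg hc]
      have a1 := Stmt6Aux.ite_nonneg'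
        (P := 30 * (∑ i, if q i = Stmt6Aux.pA then 1 else 0) ≤ 7 * n) hnn
      have a2 := Stmt6Aux.ite_nonneg'
        (P := 10 * (∑ i, if q i = Stmt6Aux.pB ∧ g (fun j => (q j).2.1) i = a i then 1 else 0) + n
              ≤ 10 * (∑ i, if q i = Stmt6Aux.pA ∧ g (fun j => (q j).2.1) i = a i then 1 else 0)) hnn
      have a3 := Stmt6Aux.ite_nonneg'
        (P := 10 * (∑ i, if q i = Stmt6Aux.pC ∧ h (fun j => (q j).2.2) i = a i then 1 else 0) + n
              ≤ 10 * (∑ i, if q i = Stmt6Aux.pA ∧ h (fun j => (q j).2.2) i = a i then 1 else 0)) hnn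
      linarith
  calc (∑ q ∈ Fintype.piFinset (fun _ : Fin n => Stmt6Aux.Sfin),
        if (0.99 : ℝ) * n <
            ((Finset.univ.filter fun i : Fin n =>
              (if (q i).1 then 1 else 0) * (if a i then 1 else 0)
                + (if (q i).2.1 then 1 else 0) * (if g (fun j => (q j).2.1) i then 1 else 0)
                + (if (q i).2.2 then 1 else 0) * (if h (fun j => (q j).2.2) i then 1 else 0)
                = (1:ℕ)).card : ℝ)
        then ((1:ℝ)/3)^n else 0)
      ≤ ∑ q ∈ Fintype.piFinset (fun _ : Fin n => Stmt6Aux.Sfin),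
        ((if 30 * (∑ i, if q i = Stmt6Aux.pA then 1 else 0) ≤ 7 * n
            then ((1:ℝ)/3)^n else 0)
        + (if 10 * (∑ i, if q i = Stmt6Aux.pB ∧ g (fun j => (q j).2.1) i = a i then 1 else 0) + n
              ≤ 10 * (∑ i, if q i = Stmt6Aux.pA ∧ g (fun j => (q j).2.1) i = a i then 1 else 0)
            then ((1:ℝ)/3)^n else 0)
        + (if 10 * (∑ i, if q i = Stmt6Aux.pC ∧ h (fun j => (q j).2.2) i = a i then 1 else 0) + n
              ≤ 10 * (∑ i, if q i = Stmt6Aux.pA ∧ h (fun j => (q j).2.2) i = a i then 1 else 0)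
            then ((1:ℝ)/3)^n else 0)) := Finset.sum_le_sum key
    _ = (∑ q ∈ Fintype.piFinset (fun _ : Fin n => Stmt6Aux.Sfin),
          (if 30 * (∑ i, if q i = Stmt6Aux.pA then 1 else 0) ≤ 7 * n
            then ((1:ℝ)/3)^n else 0))
        + (∑ q ∈ Fintype.piFinset (fun _ : Fin n => Stmt6Aux.Sfin),
          (if 10 * (∑ i, if q i = Stmt6Aux.pB ∧ g (fun j => (q j).2.1) i = a i then 1 else 0) + n
              ≤ 10 * (∑ i, if q i = Stmt6Aux.pA ∧ g (fun j => (q j).2.1) i = a i then 1 else 0)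
            then ((1:ℝ)/3)^n else 0))
        + (∑ q ∈ Fintype.piFinset (fun _ : Fin n => Stmt6Aux.Sfin),
          (if 10 * (∑ i, if q i = Stmt6Aux.pC ∧ h (fun j => (q j).2.2) i = a i then 1 else 0) + n
              ≤ 10 * (∑ i, if q i = Stmt6Aux.pA ∧ h (fun j => (q j).2.2) i = a i then 1 else 0)
            then ((1:ℝ)/3)^n else 0)) := by
        rw [Finset.sum_add_distrib, Finset.sum_add_distrib]
    _ ≤ Real.exp (-(10:ℝ)^(-(7:ℤ)) * n) + Real.exp (-(10:ℝ)^(-(7:ℤ)) * n)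
        + Real.exp (-(10:ℝ)^(-(7:ℤ)) * n) :=
        add_le_add (add_le_add (Stmt6Aux.eventA n) (Stmt6Aux.eventY n a g))
          (Stmt6Aux.eventZ n a h)
    _ = 3 * Real.exp (-(10:ℝ)^(-(7:ℤ)) * n) := by ring
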